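/- Define the geometric polynomial ω_m(x) = sum_{n=0}^m S(m,n) * n! * x^n. Then for every nonnegative integer m, ω_m(-1/2) = sum_{p=0}^m S(m,p) * p! * (-1/2)^p = 2*(1 - 2^{m+1})*B_{m+1}/(m+1), where B_{m+1} is the Bernoulli number. -/

import Mathlib

/-- Stirling numbers of the second kind, via the standard recurrence. -/
def stirling2 : ℕ → ℕ → ℕ
  | 0, 0 => 1
  | 0, _ + 1 => 0
  | _ + 1, 0 => 0
  | m + 1, n + 1 => (n + 1) * stirling2 m (n + 1) + stirling2 m n

section Aux

lemma stirling2_succ (m n : ℕ) :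
    stirling2 (m+1) (n+1) = (n + 1) * stirling2 m (n + 1) + stirling2 m n := rfl

lemma stirling2_zero_right (m : ℕ) : stirling2 (m+1) 0 = 0 := rfl

lemma stirling2_of_lt : ∀ {m p : ℕ}, m < p → stirling2 m p = 0 := by
  intro m
  induction m with
  | zero => intro p h; cases p with
    | zero => omega
    | succ q => rfl
  | succ m ih =>
    intro p h
    cases p with
    | zero => omega
    | succ q =>
      rw [stirling2_succ, ih (by omega), ih (by omega)]
      simp

lemma stirling2_choose (m : ℕ) : ∀ p, stirling2 (m+1) (p+1)
    = ∑ k ∈ Finset.range (m+1), m.choose k * stirling2 k p := by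
  induction m with
  | zero => intro p; cases p <;> simp [stirling2]
  | succ m ih =>
    intro p
    have hsplit : ∑ k ∈ Finset.range (m+2), (m+1).choose k * stirling2 k p
        = stirling2 (m+1) (p+1) + ∑ k ∈ Finset.range (m+1), m.choose k * stirling2 (k+1) p := by
      rw [Finset.sum_range_succ']
      have : ∀ k, (m+1).choose (k+1) * stirling2 (k+1) p
          = m.choose (k+1) * stirling2 (k+1) p + m.choose k * stirling2 (k+1) p := by
        intro k; rw [Nat.choose_succ_succ]; ring
      simp_rw [this]
      rw [Finset.sum_add_distrib]
      have h1 : ∑ k ∈ Finset.range (m+1), m.choose (k+1) * stirling2 (k+1) p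
          + (m+1).choose 0 * stirling2 0 p = stirling2 (m+1) (p+1) := by
        rw [ih p, Finset.sum_range_succ]
        rw [Nat.choose_succ_self, zero_mul, add_zero]
        rw [Finset.sum_range_succ']
        simp
      omega
    rw [show m+1+1 = m+2 from rfl, hsplit]
    cases p with
    | zero =>
      have : ∀ k ∈ Finset.range (m+1), m.choose k * stirling2 (k+1) 0 = 0 := by
        intro k _; rw [stirling2_zero_right, mul_zero]
      rw [Finset.sum_eq_zero this, add_zero, stirling2_succ, stirling2_succ]
      have : stirling2 (m+1) 0 = 0 := rfl
      omega
    | succ q =>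
      have : ∀ k, m.choose k * stirling2 (k+1) (q+1)
          = (q+1) * (m.choose k * stirling2 k (q+1)) + m.choose k * stirling2 k q := by
        intro k; rw [stirling2_succ]; ring
      simp_rw [this]
      rw [Finset.sum_add_distrib, ← Finset.mul_sum, ← ih, ← ih, stirling2_succ]
      ring

noncomputable def geomA (m : ℕ) : ℚ :=
  ∑ p ∈ Finset.range (m + 1), (stirling2 m p : ℚ) * (p.factorial : ℚ) * (-1 / 2) ^ p

lemma geomA_zero : geomA 0 = 1 := by simp [geomA, stirling2]

lemma geomA_ext (k m : ℕ) (h : k ≤ m) :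
    geomA k = ∑ p ∈ Finset.range (m + 1), (stirling2 k p : ℚ) * (p.factorial : ℚ) * (-1 / 2) ^ p := by
  rw [geomA]
  apply Finset.sum_subset
  · intro x hx; simp only [Finset.mem_range] at *; omega
  · intro x _ hx
    simp only [Finset.mem_range, not_lt] at hx
    rw [stirling2_of_lt (by omega)]
    simp

lemma sumA (m : ℕ) (hm : 1 ≤ m) :
    ∑ k ∈ Finset.range (m + 1), (m.choose k : ℚ) * geomA k = - geomA m := by
  obtain ⟨n, rfl⟩ : ∃ n, m = n + 1 := ⟨m - 1, by omega⟩
  set m := n + 1 with hmdef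
  have key : ∑ k ∈ Finset.range (m + 1), (m.choose k : ℚ) * geomA k
      = ∑ p ∈ Finset.range (m + 1), (stirling2 (m+1) (p+1) : ℚ) * (p.factorial : ℚ) * (-1/2) ^ p := by
    have : ∀ k ∈ Finset.range (m+1), (m.choose k : ℚ) * geomA k
        = ∑ p ∈ Finset.range (m + 1),
            (m.choose k : ℚ) * ((stirling2 k p : ℚ) * (p.factorial : ℚ) * (-1 / 2) ^ p) := by
      intro k hk
      rw [geomA_ext k m (Nat.lt_succ_iff.mp (Finset.mem_range.mp hk)), Finset.mul_sum]
    rw [Finset.sum_congr rfl this, Finset.sum_comm]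
    apply Finset.sum_congr rfl
    intro p _
    rw [stirling2_choose]
    push_cast
    rw [Finset.sum_mul, Finset.sum_mul]
    apply Finset.sum_congr rfl
    intro k _; ring
  have hrec : ∀ p, (stirling2 (m+1) (p+1) : ℚ) = ((p:ℚ)+1) * stirling2 m (p+1) + stirling2 m p := by
    intro p; rw [stirling2_succ]; push_cast; ring
  have key2 : (∑ p ∈ Finset.range (m+1), (stirling2 (m+1) (p+1) : ℚ) * (p.factorial : ℚ) * (-1/2)^p)
      = (∑ p ∈ Finset.range (m+1), ((p:ℚ)+1) * (stirling2 m (p+1) : ℚ) * (p.factorial : ℚ) * (-1/2)^p)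
        + ∑ p ∈ Finset.range (m+1), (stirling2 m p : ℚ) * (p.factorial : ℚ) * (-1/2)^p := by
    rw [← Finset.sum_add_distrib]
    apply Finset.sum_congr rfl
    intro p _
    rw [hrec]; ring
  have h2 : ∑ p ∈ Finset.range (m+1), (stirling2 m p : ℚ) * (p.factorial : ℚ) * (-1/2) ^ p
      = geomA m := rfl
  have hT : (-1/2 : ℚ) * ∑ p ∈ Finset.range (m+1),
      ((p:ℚ)+1) * (stirling2 m (p+1) : ℚ) * (p.factorial : ℚ) * (-1/2) ^ p = geomA m := by
    have step : ∀ p : ℕ, (-1/2:ℚ) * (((p:ℚ)+1) * (stirling2 m (p+1) : ℚ) * (p.factorial : ℚ) * (-1/2)^p)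
        = (stirling2 m (p+1) : ℚ) * ((p+1).factorial : ℚ) * (-1/2)^(p+1) := by
      intro p; rw [Nat.factorial_succ]; push_cast; ring
    rw [Finset.mul_sum]
    simp_rw [step]
    have expand : ∑ q ∈ Finset.range (m+2), (stirling2 m q : ℚ) * (q.factorial : ℚ) * (-1/2)^q
        = geomA m := by
      rw [Finset.sum_range_succ, stirling2_of_lt (show m < m + 1 by omega)]
      simp [geomA]
    rw [← expand]
    conv_rhs => rw [Finset.sum_range_succ']
    norm_num [stirling2_zero_right]
    exact stirling2_zero_right n
  rw [key, key2, h2]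
  linarith [hT]

open PowerSeries

lemma key_ps : (exp ℚ + 1) * rescale (2:ℚ) (bernoulliPowerSeries ℚ)
    = 2 * bernoulliPowerSeries ℚ := by
  have hne : exp ℚ - 1 ≠ 0 := by
    intro h
    have := congrArg (coeff 1) h
    simp [coeff_exp] at this
  apply mul_right_cancel₀ hne
  have h2 : rescale (2:ℚ) (exp ℚ) = exp ℚ * exp ℚ := by
    have h := exp_pow_eq_rescale_exp (A := ℚ) 2
    norm_num at h
    rw [← h, sq]
  calc (exp ℚ + 1) * rescale (2:ℚ) (bernoulliPowerSeries ℚ) * (exp ℚ - 1)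
      = rescale (2:ℚ) (bernoulliPowerSeries ℚ) * (rescale (2:ℚ) (exp ℚ) - 1) := by
        rw [h2]; ring
    _ = rescale (2:ℚ) (bernoulliPowerSeries ℚ * (exp ℚ - 1)) := by
        rw [map_mul, map_sub, map_one]
    _ = rescale (2:ℚ) X := by rw [bernoulliPowerSeries_mul_exp_sub_one]
    _ = 2 * bernoulliPowerSeries ℚ * (exp ℚ - 1) := by
        rw [rescale_X, mul_assoc, bernoulliPowerSeries_mul_exp_sub_one]
        rw [show (C (2:ℚ) : ℚ⟦X⟧) = 2 from map_ofNat C 2]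

lemma sum_choose_two_pow_bernoulli (n : ℕ) :
    ∑ j ∈ Finset.range (n+1), (n.choose j : ℚ) * 2^j * bernoulli j
      = (2 - 2^n) * bernoulli n := by
  have h := congrArg (coeff n) key_ps
  rw [show (2 : ℚ⟦X⟧) * bernoulliPowerSeries ℚ = C (2:ℚ) * bernoulliPowerSeries ℚ by
        rw [map_ofNat C 2],
      coeff_C_mul, coeff_mul, Finset.Nat.sum_antidiagonal_eq_sum_range_succ_mk] at h
  simp only [bernoulliPowerSeries, coeff_mk, coeff_rescale, map_add, coeff_exp, coeff_one,
    Algebra.algebraMap_self, RingHom.id_apply, one_div] at h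
  have hsplit : ∑ k ∈ Finset.range (n+1),
      (((k.factorial : ℚ))⁻¹ + if k = 0 then 1 else 0) * (2^(n-k) * (bernoulli (n-k) / (n-k).factorial))
      = (∑ k ∈ Finset.range (n+1),
          ((k.factorial : ℚ))⁻¹ * (2^(n-k) * (bernoulli (n-k) / (n-k).factorial)))
        + 2^n * (bernoulli n / n.factorial) := by
    simp_rw [add_mul, ite_mul, one_mul, zero_mul]
    rw [Finset.sum_add_distrib, Finset.sum_ite_eq' (Finset.range (n+1)) 0]
    simp
  rw [hsplit] at h
  have hsum : ∑ k ∈ Finset.range (n+1),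
      ((k.factorial : ℚ))⁻¹ * (2^(n-k) * (bernoulli (n-k) / (n-k).factorial))
      = (2 - 2^n) * bernoulli n / n.factorial := by
    field_simp at h ⊢
    linarith [h]
  calc ∑ j ∈ Finset.range (n+1), (n.choose j : ℚ) * 2^j * bernoulli j
      = ∑ k ∈ Finset.range (n+1), (n.choose (n-k) : ℚ) * 2^(n-k) * bernoulli (n-k) := by
        rw [← Finset.sum_range_reflect]
        apply Finset.sum_congr rfl
        intro k hk
        rfl
    _ = ∑ k ∈ Finset.range (n+1),
          (n.factorial : ℚ) * (((k.factorial : ℚ))⁻¹ * (2^(n-k) * (bernoulli (n-k) / (n-k).factorial))) := by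
        apply Finset.sum_congr rfl
        intro k hk
        simp only [Finset.mem_range] at hk
        have hk' : k ≤ n := by omega
        rw [Nat.choose_symm hk', Nat.cast_choose ℚ hk']
        have h1 : (k.factorial : ℚ) ≠ 0 := Nat.cast_ne_zero.mpr k.factorial_ne_zero
        have h2 : ((n-k).factorial : ℚ) ≠ 0 := Nat.cast_ne_zero.mpr (n-k).factorial_ne_zero
        field_simp
    _ = (n.factorial : ℚ) * ∑ k ∈ Finset.range (n+1),
          ((k.factorial : ℚ))⁻¹ * (2^(n-k) * (bernoulli (n-k) / (n-k).factorial)) := by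
        rw [Finset.mul_sum]
    _ = (2 - 2^n) * bernoulli n := by
        rw [hsum]
        field_simp

noncomputable def bSeq (k : ℕ) : ℚ := 2 * (1 - 2 ^ (k + 1)) * bernoulli (k + 1) / (k + 1)

lemma sumB (m : ℕ) (hm : 1 ≤ m) :
    ∑ k ∈ Finset.range (m + 1), (m.choose k : ℚ) * bSeq k = - bSeq m := by
  have hm1 : ((m : ℚ) + 1) ≠ 0 := by positivity
  apply mul_left_cancel₀ hm1
  rw [Finset.mul_sum]
  have step : ∀ k ∈ Finset.range (m+1), ((m:ℚ)+1) * ((m.choose k : ℚ) * bSeq k)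
      = 2 * (((m+1).choose (k+1) : ℚ)) * (1 - 2^(k+1)) * bernoulli (k+1) := by
    intro k _
    have hc := Nat.add_one_mul_choose_eq m k
    have hc' : ((m:ℚ)+1) * (m.choose k : ℚ) = ((m+1).choose (k+1) : ℚ) * ((k:ℚ)+1) := by
      exact_mod_cast congrArg (Nat.cast : ℕ → ℚ) hc
    have hk1 : ((k:ℚ)+1) ≠ 0 := by positivity
    rw [bSeq]
    field_simp
    linear_combination ((1 - 2^(k+1)) * bernoulli (k+1)) * hc'
  rw [Finset.sum_congr rfl step]
  have reindex : ∑ k ∈ Finset.range (m+1),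
      2 * (((m+1).choose (k+1) : ℚ)) * (1 - 2^(k+1)) * bernoulli (k+1)
      = ∑ j ∈ Finset.range (m+2), 2 * (((m+1).choose j : ℚ)) * (1 - 2^j) * bernoulli j := by
    conv_rhs => rw [Finset.sum_range_succ']
    norm_num
  rw [reindex]
  have expand : ∀ j, 2 * (((m+1).choose j : ℚ)) * (1 - 2^j) * bernoulli j
      = 2 * ((((m+1).choose j : ℚ)) * bernoulli j) - 2 * ((((m+1).choose j : ℚ)) * 2^j * bernoulli j) := by
    intro j; ring
  simp_rw [expand]
  rw [Finset.sum_sub_distrib, ← Finset.mul_sum, ← Finset.mul_sum]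
  rw [sum_choose_two_pow_bernoulli (m+1)]
  have hb : ∑ j ∈ Finset.range (m+2), ((m+1).choose j : ℚ) * bernoulli j
      = (if m + 1 = 1 then (1:ℚ) else 0) + bernoulli (m+1) := by
    rw [Finset.sum_range_succ, sum_bernoulli]
    simp
  rw [hb, if_neg (by omega)]
  rw [bSeq]
  field_simp
  ring

lemma geom_eq_bSeq (m : ℕ) : geomA m = bSeq m := by
  induction m using Nat.strong_induction_on with
  | _ m ih =>
    rcases Nat.eq_zero_or_pos m with rfl | hm
    · rw [geomA_zero, bSeq]
      norm_num [bernoulli_one]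
    · have ha := sumA m hm
      have hb := sumB m hm
      rw [Finset.sum_range_succ] at ha hb
      have hsame : ∑ k ∈ Finset.range m, (m.choose k : ℚ) * geomA k
          = ∑ k ∈ Finset.range m, (m.choose k : ℚ) * bSeq k :=
        Finset.sum_congr rfl fun k hk => by rw [ih k (Finset.mem_range.mp hk)]
      rw [Nat.choose_self] at ha hb
      push_cast at ha hb
      linarith

end Aux

theorem geometric_poly_at_neg_half (m : ℕ) :
    ∑ p ∈ Finset.range (m + 1), (stirling2 m p : ℚ) * (p.factorial : ℚ) * (-1 / 2) ^ p
      = 2 * (1 - 2 ^ (m + 1)) * bernoulli (m + 1) / (m + 1) := by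
  exact geom_eq_bSeq m
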